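/- Let T be a ternary tree on a label set N with |N| = n ≥ 4, let d be a symmetric real-valued function on pairs of elements of N, and define the cost of each quartet topology by C(uv|wx) = d(u,v) + d(w,x). For each internal node p of T, deleting p splits T into three subtrees T_1, T_2, T_3 containing n_1, n_2, n_3 leaves respectively (n = n_1 + n_2 + n_3); define C(p) = Σ_{i=1}^{3} C(n_i, 2) · Σ_{u a leaf of T_j, v a leaf of T_k} d(u,v), where {i,j,k} = {1,2,3}. Then the tree cost satisfies C_T = Σ_{p internal node of T} C(p). -/

import Mathlib

/-- A ternary tree on a label set `N`: a finite undirected tree in which every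
vertex has degree 1 or 3, together with a bijective labeling of the degree-1
vertices (leaves) by the elements of `N`. -/
structure TernaryTree (N : Type) where
  V : Type
  [fintypeV : Fintype V]
  [decEqV : DecidableEq V]
  G : SimpleGraph V
  [decAdj : DecidableRel G.Adj]
  isTree : G.IsTree
  deg13 : ∀ v : V, G.degree v = 1 ∨ G.degree v = 3
  leaf : N → V
  leaf_inj : Function.Injective leaf
  leaf_deg : ∀ x : N, G.degree (leaf x) = 1
  leaf_surj : ∀ v : V, G.degree v = 1 → ∃ x : N, leaf x = v

attribute [instance] TernaryTree.fintypeV TernaryTree.decEqV TernaryTree.decAdj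

/-- `T` is consistent with (embeds) the quartet topology `uv|wx`: the unique path
from leaf `u` to leaf `v` is vertex-disjoint from the unique path from leaf `w`
to leaf `x`. -/
def TernaryTree.Consistent {N : Type} (T : TernaryTree N) (u v w x : N) : Prop :=
  ∃ (p : T.G.Walk (T.leaf u) (T.leaf v)) (q : T.G.Walk (T.leaf w) (T.leaf x)),
    p.IsPath ∧ q.IsPath ∧ ∀ a, a ∈ p.support → a ∉ q.support

/-- A quartet topology on `N`: a partition of a 4-element subset of `N`
into two unordered pairs, encoded as an element of `Sym2 (Sym2 N)`. -/
def IsQuartetTopology {N : Type} (q : Sym2 (Sym2 N)) : Prop :=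
  ∃ u v w x : N, u ≠ v ∧ u ≠ w ∧ u ≠ x ∧ v ≠ w ∧ v ≠ x ∧ w ≠ x ∧
    q = s(s(u, v), s(w, x))

/-- `QT T` is the set of quartet topologies embedded in the ternary tree `T`. -/
def TernaryTree.QT {N : Type} (T : TernaryTree N) : Set (Sym2 (Sym2 N)) :=
  {q | ∃ u v w x : N, u ≠ v ∧ u ≠ w ∧ u ≠ x ∧ v ≠ w ∧ v ≠ x ∧ w ≠ x ∧
        q = s(s(u, v), s(w, x)) ∧ T.Consistent u v w x}

/-- `q` is one of the three quartet topologies of the 4-element set `S`. -/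
def IsTopologyOn {N : Type} [DecidableEq N] (q : Sym2 (Sym2 N)) (S : Finset N) : Prop :=
  ∃ u v w x : N, u ≠ v ∧ u ≠ w ∧ u ≠ x ∧ v ≠ w ∧ v ≠ x ∧ w ≠ x ∧
    ({u, v, w, x} : Finset N) = S ∧ q = s(s(u, v), s(w, x))

/-- The cost `C_T` of a ternary tree `T` under the cost function `C`: the sum,
over all quartets, of the cost of the unique topology of that quartet that is
embedded in `T`, i.e. the sum of `C` over the set `Q_T` of embedded quartet
topologies. -/
noncomputable def TernaryTree.cost {N : Type} [Fintype N]
    (T : TernaryTree N) (C : Sym2 (Sym2 N) → ℝ) : ℝ :=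
  ∑ᶠ q ∈ T.QT, C q

/-- `m`: the sum, over all quartets, of the minimal cost among the three
topologies of the quartet. -/
noncomputable def minTotal {N : Type} [Fintype N] [DecidableEq N]
    (C : Sym2 (Sym2 N) → ℝ) : ℝ :=
  ∑ S ∈ Finset.powersetCard 4 (Finset.univ : Finset N),
    sInf (C '' {q | IsTopologyOn q S})

/-- `M`: the sum, over all quartets, of the maximal cost among the three
topologies of the quartet. -/
noncomputable def maxTotal {N : Type} [Fintype N] [DecidableEq N]
    (C : Sym2 (Sym2 N) → ℝ) : ℝ :=
  ∑ S ∈ Finset.powersetCard 4 (Finset.univ : Finset N),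
    sSup (C '' {q | IsTopologyOn q S})

/-- `a` and `b` lie in the same component of the forest obtained from `T` by
deleting the vertex `p`: there is a walk from `a` to `b` avoiding `p`. -/
def TernaryTree.ConnAvoiding {N : Type} (T : TernaryTree N) (p a b : T.V) : Prop :=
  ∃ w : T.G.Walk a b, p ∉ w.support


namespace TernaryTree

variable {N : Type} (T : TernaryTree N)

open SimpleGraph Walk

/-- the unique path between two vertices -/
noncomputable def upath (u v : T.V) : T.G.Walk u v :=
  (T.isTree.existsUnique_path u v).exists.choose

lemma upath_isPath (u v : T.V) : (T.upath u v).IsPath :=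
  (T.isTree.existsUnique_path u v).exists.choose_spec

lemma upath_eq {u v : T.V} (p : T.G.Walk u v) (hp : p.IsPath) : p = T.upath u v :=
  ((T.isTree.existsUnique_path u v).unique hp (T.upath_isPath u v))

lemma upath_self (u : T.V) : T.upath u u = Walk.nil :=
  (T.upath_eq Walk.nil (by simp)).symm

lemma not_connAvoiding_iff {p u v : T.V} :
    ¬ T.ConnAvoiding p u v ↔ p ∈ (T.upath u v).support := by
  constructor
  · intro h
    by_contra hp
    exact h ⟨T.upath u v, hp⟩
  · rintro hmem ⟨w, hw⟩
    have : w.bypass = T.upath u v := T.upath_eq _ w.bypass_isPath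
    exact hw (w.support_bypass_subset (this ▸ hmem))

lemma connAvoiding_iff {p u v : T.V} :
    T.ConnAvoiding p u v ↔ p ∉ (T.upath u v).support := by
  rw [← not_connAvoiding_iff]; tauto

lemma ca_refl {p u : T.V} (h : p ≠ u) : T.ConnAvoiding p u u :=
  ⟨Walk.nil, by simpa using h⟩

lemma ca_symm {p u v : T.V} (h : T.ConnAvoiding p u v) : T.ConnAvoiding p v u := by
  obtain ⟨w, hw⟩ := h
  exact ⟨w.reverse, by simpa [Walk.support_reverse] using hw⟩

lemma ca_trans {p u v x : T.V} (h : T.ConnAvoiding p u v) (h' : T.ConnAvoiding p v x) :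
    T.ConnAvoiding p u x := by
  obtain ⟨w, hw⟩ := h; obtain ⟨w', hw'⟩ := h'
  exact ⟨w.append w', by
    intro hm
    rcases (Walk.mem_support_append_iff _ _).1 hm with h1 | h1
    exacts [hw h1, hw' h1]⟩

lemma upath_takeUntil {u v : T.V} (y : T.V) (h : y ∈ (T.upath u v).support) :
    (T.upath u v).takeUntil y h = T.upath u y :=
  T.upath_eq _ ((T.upath_isPath u v).takeUntil h)

lemma upath_dropUntil {u v : T.V} (y : T.V) (h : y ∈ (T.upath u v).support) :
    (T.upath u v).dropUntil y h = T.upath y v :=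
  T.upath_eq _ ((T.upath_isPath u v).dropUntil h)

lemma upath_reverse (u v : T.V) : (T.upath u v).reverse = T.upath v u :=
  T.upath_eq _ ((T.upath_isPath u v).reverse)

lemma mem_upath_symm {z u v : T.V} (h : z ∈ (T.upath u v).support) :
    z ∈ (T.upath v u).support := by
  rw [← T.upath_reverse, Walk.support_reverse]; simpa using h

/-- S1: splitting -/
lemma mem_upath_split {u v y z : T.V} (hy : y ∈ (T.upath u v).support)
    (hz : z ∈ (T.upath u v).support) :
    z ∈ (T.upath u y).support ∨ z ∈ (T.upath y v).support := by
  conv at hz => rw [← Walk.take_spec (T.upath u v) hy]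
  rcases (Walk.mem_support_append_iff _ _).1 hz with h | h
  · left; rwa [T.upath_takeUntil y hy] at h
  · right; rwa [T.upath_dropUntil y hy] at h

/-- S2: the two halves meet only at the split point -/
lemma mem_upath_split_unique {u v y z : T.V} (hy : y ∈ (T.upath u v).support)
    (h1 : z ∈ (T.upath u y).support) (h2 : z ∈ (T.upath y v).support) : z = y := by
  have hnd : ((T.upath u v).support).Nodup := (T.upath_isPath u v).2
  conv at hnd => rw [← Walk.take_spec (T.upath u v) hy, Walk.support_append]
  rw [← T.upath_takeUntil y hy] at h1
  rw [← T.upath_dropUntil y hy] at h2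
  have htail : z ∉ ((T.upath u v).dropUntil y hy).support.tail :=
    (List.nodup_append'.mp hnd).2.2 h1
  rcases List.mem_cons.mp (by
      rwa [Walk.support_eq_cons ((T.upath u v).dropUntil y hy)] at h2) with h | h
  · exact h
  · exact absurd h htail

/-- subset lemmas -/
lemma upath_support_subset_left {u v y : T.V} (hy : y ∈ (T.upath u v).support) :
    (T.upath u y).support ⊆ (T.upath u v).support := by
  rw [← T.upath_takeUntil y hy]; exact Walk.support_takeUntil_subset _ hy

lemma upath_support_subset_right {u v y : T.V} (hy : y ∈ (T.upath u v).support) :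
    (T.upath y v).support ⊆ (T.upath u v).support := by
  rw [← T.upath_dropUntil y hy]; exact Walk.support_dropUntil_subset _ hy



lemma adj_eq_of_degree_one {v m n : T.V} (hdeg : T.G.degree v = 1)
    (hm : T.G.Adj v m) (hn : T.G.Adj v n) : m = n := by
  have h := Finset.card_le_one.mp (le_of_eq hdeg)
  exact h m ((T.G.mem_neighborFinset v m).mpr hm) n ((T.G.mem_neighborFinset v n).mpr hn)

lemma exists_first {u v : T.V} (W : T.G.Walk u v) (hW : W.IsPath) (hne : u ≠ v) :
    ∃ m, T.G.Adj u m ∧ m ∈ W.support ∧ m ≠ u := by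
  have hnil : ¬ W.Nil := by
    intro h; exact hne (Walk.Nil.eq h)
  obtain ⟨m, hadj, q, rfl⟩ := Walk.not_nil_iff.mp hnil
  refine ⟨m, hadj, by simp, ?_⟩
  have : u ∉ q.support := by
    have := hW.2
    simp only [Walk.support_cons] at this
    exact (List.nodup_cons.mp this).1
  intro h; exact this (h ▸ q.start_mem_support)

lemma exists_penultimate {u v : T.V} (W : T.G.Walk u v) (hW : W.IsPath) (hne : u ≠ v) :
    ∃ m, T.G.Adj v m ∧ m ∈ W.support ∧ m ≠ v := by
  obtain ⟨m, hadj, hmem, hne'⟩ := T.exists_first W.reverse hW.reverse (Ne.symm hne)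
  exact ⟨m, hadj, by rwa [Walk.support_reverse, List.mem_reverse] at hmem, hne'⟩

lemma degree_ne_one_interior {u v y : T.V} (hy : y ∈ (T.upath u v).support)
    (hu : y ≠ u) (hv : y ≠ v) : T.G.degree y ≠ 1 := by
  intro hdeg
  have hy1 : y ∈ (T.upath u y).support := Walk.end_mem_support _
  obtain ⟨m1, hadj1, hmem1, hne1⟩ :=
    T.exists_penultimate (T.upath u y) (T.upath_isPath u y) (Ne.symm hu)
  obtain ⟨m2, hadj2, hmem2, hne2⟩ :=
    T.exists_first (T.upath y v) (T.upath_isPath y v) hv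
  have : m1 = m2 := T.adj_eq_of_degree_one hdeg hadj1 hadj2
  exact hne1 (T.mem_upath_split_unique hy hmem1 (this ▸ hmem2))

lemma endpoint_of_degree_one {u v y : T.V} (hy : y ∈ (T.upath u v).support)
    (hdeg : T.G.degree y = 1) : y = u ∨ y = v := by
  by_contra h
  push_neg at h
  exact T.degree_ne_one_interior hy h.1 h.2 hdeg

lemma exists_adj_ca {p z : T.V} (h : p ≠ z) : ∃ n, T.G.Adj p n ∧ T.ConnAvoiding p z n := by
  have hnil : ¬ (T.upath p z).Nil := fun hn => h (hn.eq)
  obtain ⟨m, hadj, q, hq⟩ := Walk.not_nil_iff.mp hnil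
  refine ⟨m, hadj, ?_⟩
  have hp : p ∉ q.support := by
    have := (T.upath_isPath p z).2
    rw [hq] at this
    simp only [Walk.support_cons] at this
    exact (List.nodup_cons.mp this).1
  exact ⟨q.reverse, by rwa [Walk.support_reverse, List.mem_reverse]⟩

lemma ca_of_deg3 {p : T.V} (h3 : T.G.degree p = 3) {a b w x : T.V}
    (hab : ¬ T.ConnAvoiding p a b)
    (hwa : ¬ T.ConnAvoiding p w a) (hwb : ¬ T.ConnAvoiding p w b)
    (hxa : ¬ T.ConnAvoiding p x a) (hxb : ¬ T.ConnAvoiding p x b)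
    (ha : p ≠ a) (hb : p ≠ b) (hw : p ≠ w) (hx : p ≠ x) :
    T.ConnAvoiding p w x := by
  obtain ⟨na, hana, hca⟩ := T.exists_adj_ca ha
  obtain ⟨nb, hanb, hcb⟩ := T.exists_adj_ca hb
  obtain ⟨nw, hanw, hcw⟩ := T.exists_adj_ca hw
  obtain ⟨nx, hanx, hcx⟩ := T.exists_adj_ca hx
  have key : ∀ {z z' n : T.V}, T.ConnAvoiding p z n → T.ConnAvoiding p z' n →
      T.ConnAvoiding p z z' := fun h1 h2 => T.ca_trans h1 (T.ca_symm h2)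
  have hnab : na ≠ nb := fun h => hab (key hca (h ▸ hcb))
  have hnwa : nw ≠ na := fun h => hwa (key hcw (h.symm ▸ hca))
  have hnwb : nw ≠ nb := fun h => hwb (key hcw (h.symm ▸ hcb))
  have hnxa : nx ≠ na := fun h => hxa (key hcx (h.symm ▸ hca))
  have hnxb : nx ≠ nb := fun h => hxb (key hcx (h.symm ▸ hcb))
  by_cases hwx : nw = nx
  · exact key hcw (hwx ▸ hcx)
  · exfalso
    have hsub : ({na, nb, nw, nx} : Finset T.V) ⊆ T.G.neighborFinset p := by
      intro z hz
      simp only [Finset.mem_insert, Finset.mem_singleton] at hz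
      rcases hz with rfl | rfl | rfl | rfl <;>
        simp [SimpleGraph.mem_neighborFinset, hana, hanb, hanw, hanx]
    have hcard : ({na, nb, nw, nx} : Finset T.V).card = 4 := by
      rw [Finset.card_insert_of_notMem (by simp [hnab, hnwa.symm, hnxa.symm]),
          Finset.card_insert_of_notMem (by simp [hnwb.symm, hnxb.symm]),
          Finset.card_insert_of_notMem (by simp [hwx]),
          Finset.card_singleton]
    have := Finset.card_le_card hsub
    rw [hcard] at this
    rw [SimpleGraph.card_neighborFinset_eq_degree, h3] at this
    omega

lemma isPath_append {u p v : T.V} {W1 : T.G.Walk u p} {W2 : T.G.Walk p v}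
    (h1 : W1.IsPath) (h2 : W2.IsPath)
    (hint : ∀ z, z ∈ W1.support → z ∈ W2.support → z = p) :
    (W1.append W2).IsPath := by
  rw [Walk.isPath_def, Walk.support_append, List.nodup_append']
  have h2c : W2.support = p :: W2.support.tail := Walk.support_eq_cons W2
  have hpt : p ∉ W2.support.tail := by
    have := h2.2; rw [h2c] at this; exact (List.nodup_cons.mp this).1
  refine ⟨h1.2, ?_, ?_⟩
  · have := h2.2; rw [h2c] at this; exact (List.nodup_cons.mp this).2
  · intro z hz1 hz2
    have hz2' : z ∈ W2.support := by rw [h2c]; exact List.mem_cons_of_mem _ hz2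
    have := hint z hz1 hz2'
    exact hpt (this ▸ hz2)

lemma first_hit {u v : T.V} (R : T.G.Walk u v) (S : T.V → Prop) (hv : S v) :
    ∃ p, S p ∧ p ∈ R.support ∧
      ∃ W : T.G.Walk u p, W.support ⊆ R.support ∧ ∀ z ∈ W.support, S z → z = p := by
  classical
  induction R with
  | nil =>
    exact ⟨_, hv, Walk.start_mem_support _, Walk.nil, by simp, by simp⟩
  | @cons u' m v' h q ih =>
    by_cases hS : S u'
    · exact ⟨u', hS, Walk.start_mem_support _, Walk.nil, by simp, by simp⟩
    · obtain ⟨p, hSp, hmem, W', hsub, hprop⟩ := ih hv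
      refine ⟨p, hSp, by simp [hmem], Walk.cons h W', ?_, ?_⟩
      · simp only [Walk.support_cons]
        exact List.cons_subset_cons _ hsub
      · intro z hz hSz
        simp only [Walk.support_cons, List.mem_cons] at hz
        rcases hz with rfl | hz
        · exact absurd hSz hS
        · exact hprop z hz hSz

end TernaryTree

/-- `Dist4`: the four labels are pairwise distinct. -/
def Dist4 {N : Type} (a b w x : N) : Prop := a ≠ b ∧ a ≠ w ∧ a ≠ x ∧ b ≠ w ∧ b ≠ x ∧ w ≠ x

namespace TernaryTree
variable {N : Type} (T : TernaryTree N)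
open SimpleGraph Walk

/-- `NodeFor p a b w x`: `p` is an internal node separating `{w,x}` from `a` and `b`. -/
def NodeFor (p : T.V) (a b w x : N) : Prop :=
  T.G.degree p = 3 ∧ ¬T.ConnAvoiding p (T.leaf a) (T.leaf b) ∧
  ¬T.ConnAvoiding p (T.leaf w) (T.leaf a) ∧ ¬T.ConnAvoiding p (T.leaf w) (T.leaf b) ∧
  ¬T.ConnAvoiding p (T.leaf x) (T.leaf a) ∧ ¬T.ConnAvoiding p (T.leaf x) (T.leaf b)

lemma ne_leaf_of_deg3 {p : T.V} (h3 : T.G.degree p = 3) (z : N) : p ≠ T.leaf z := by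
  intro h; rw [h, T.leaf_deg z] at h3; omega

lemma nodeFor_imp {p : T.V} {a b w x : N} (h : T.NodeFor p a b w x) (hwx : w ≠ x) :
    Dist4 a b w x ∧ T.Consistent a b w x := by
  obtain ⟨h3, hab, hwa, hwb, hxa, hxb⟩ := h
  have hpa := T.ne_leaf_of_deg3 h3 a
  have hpb := T.ne_leaf_of_deg3 h3 b
  have hpw := T.ne_leaf_of_deg3 h3 w
  have hpx := T.ne_leaf_of_deg3 h3 x
  have haneb : a ≠ b := fun h => hab (by rw [h]; exact T.ca_refl hpb)
  have hwnea : w ≠ a := fun h => hwa (by rw [h]; exact T.ca_refl hpa)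
  have hwneb : w ≠ b := fun h => hwb (by rw [h]; exact T.ca_refl hpb)
  have hxnea : x ≠ a := fun h => hxa (by rw [h]; exact T.ca_refl hpa)
  have hxneb : x ≠ b := fun h => hxb (by rw [h]; exact T.ca_refl hpb)
  have hcawx : T.ConnAvoiding p (T.leaf w) (T.leaf x) :=
    T.ca_of_deg3 h3 hab hwa hwb hxa hxb hpa hpb hpw hpx
  refine ⟨⟨haneb, hwnea.symm, hxnea.symm, hwneb.symm, hxneb.symm, hwx⟩, ?_⟩
  refine ⟨T.upath (T.leaf a) (T.leaf b), T.upath (T.leaf w) (T.leaf x),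
    T.upath_isPath _ _, T.upath_isPath _ _, ?_⟩
  intro y hyP hyQ
  have hpQ : p ∉ (T.upath (T.leaf w) (T.leaf x)).support := T.connAvoiding_iff.mp hcawx
  have hpP : p ∈ (T.upath (T.leaf a) (T.leaf b)).support := T.not_connAvoiding_iff.mp hab
  have hyp : y ≠ p := fun h => hpQ (h ▸ hyQ)
  have hcwy : T.ConnAvoiding p (T.leaf w) y := by
    rw [T.connAvoiding_iff]
    intro hmem
    exact hpQ (T.upath_support_subset_left hyQ hmem)
  rcases T.mem_upath_split hpP hyP with hcase | hcase
  · -- y on the a-side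
    have hcay : T.ConnAvoiding p (T.leaf a) y := by
      rw [T.connAvoiding_iff]
      intro hmem
      exact hyp.symm (T.mem_upath_split_unique hcase hmem (Walk.end_mem_support _))
    exact hwa (T.ca_symm (T.ca_trans hcay (T.ca_symm hcwy)))
  · -- y on the b-side
    have hcase' : y ∈ (T.upath (T.leaf b) p).support := T.mem_upath_symm hcase
    have hcby : T.ConnAvoiding p (T.leaf b) y := by
      rw [T.connAvoiding_iff]
      intro hmem
      exact hyp.symm (T.mem_upath_split_unique hcase' hmem (Walk.end_mem_support _))
    exact hwb (T.ca_symm (T.ca_trans hcby (T.ca_symm hcwy)))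

lemma nodeFor_exists {a b w x : N} (hd : Dist4 a b w x) (hc : T.Consistent a b w x) :
    ∃ p, T.NodeFor p a b w x := by
  classical
  obtain ⟨hdab, hdaw, hdax, hdbw, hdbx, hdwx⟩ := hd
  have hlab : T.leaf a ≠ T.leaf b := fun h => hdab (T.leaf_inj h)
  have hlaw : T.leaf a ≠ T.leaf w := fun h => hdaw (T.leaf_inj h)
  have hlbw : T.leaf b ≠ T.leaf w := fun h => hdbw (T.leaf_inj h)
  have hlwa : T.leaf w ≠ T.leaf a := hlaw.symm
  -- disjointness of the two unique paths
  obtain ⟨P0, Q0, hP0, hQ0, hdisj0⟩ := hc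
  have hPeq := T.upath_eq P0 hP0
  have hQeq := T.upath_eq Q0 hQ0
  have hdisjU : ∀ y ∈ (T.upath (T.leaf a) (T.leaf b)).support,
      y ∉ (T.upath (T.leaf w) (T.leaf x)).support := by
    rw [← hPeq, ← hQeq]; exact hdisj0
  -- first hit of the path w→a on the path a→b
  obtain ⟨p, hSp, hpR, W, hWsub, hWprop⟩ :=
    T.first_hit (T.upath (T.leaf w) (T.leaf a))
      (fun z => z ∈ (T.upath (T.leaf a) (T.leaf b)).support)
      (Walk.start_mem_support _)
  have hpb_ne : p ≠ T.leaf b := by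
    rintro rfl
    rcases T.endpoint_of_degree_one hpR (T.leaf_deg b) with h | h
    · exact hlbw h
    · exact hlab h.symm
  have hpa_ne : p ≠ T.leaf a := by
    rintro rfl
    have hWbp : W.bypass = T.upath (T.leaf w) (T.leaf a) := T.upath_eq _ W.bypass_isPath
    have hRW : (T.upath (T.leaf w) (T.leaf a)).support ⊆ W.support := by
      rw [← hWbp]; exact W.support_bypass_subset
    obtain ⟨m, hadjm, hmemm, hnem⟩ :=
      T.exists_penultimate (T.upath (T.leaf w) (T.leaf a)) (T.upath_isPath _ _) hlwa
    obtain ⟨n, hadjn, hmemn, hnen⟩ :=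
      T.exists_first (T.upath (T.leaf a) (T.leaf b)) (T.upath_isPath _ _) hlab
    have hmn : m = n := T.adj_eq_of_degree_one (T.leaf_deg a) hadjm hadjn
    exact hnem (hWprop m (hRW hmemm) (by rw [hmn]; exact hmemn))
  have hdeg : T.G.degree p = 3 := by
    rcases T.deg13 p with h1 | h3
    · exact absurd h1 (T.degree_ne_one_interior hSp hpa_ne hpb_ne)
    · exact h3
  have hab : ¬ T.ConnAvoiding p (T.leaf a) (T.leaf b) := T.not_connAvoiding_iff.mpr hSp
  have hwa : ¬ T.ConnAvoiding p (T.leaf w) (T.leaf a) := T.not_connAvoiding_iff.mpr hpR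
  have hwb : ¬ T.ConnAvoiding p (T.leaf w) (T.leaf b) := by
    have hint : ∀ z, z ∈ W.bypass.support → z ∈ (T.upath p (T.leaf b)).support → z = p := by
      intro z hz1 hz2
      exact hWprop z (W.support_bypass_subset hz1) (T.upath_support_subset_right hSp hz2)
    have hpath := T.isPath_append W.bypass_isPath (T.upath_isPath p (T.leaf b)) hint
    have heq := T.upath_eq _ hpath
    apply T.not_connAvoiding_iff.mpr
    rw [← heq]
    rw [Walk.mem_support_append_iff]
    exact Or.inr (Walk.start_mem_support _)
  have hcawx : T.ConnAvoiding p (T.leaf w) (T.leaf x) :=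
    T.connAvoiding_iff.mpr (hdisjU p hSp)
  exact ⟨p, hdeg, hab, hwa, hwb,
    fun hca => hwa (T.ca_trans hcawx hca),
    fun hca => hwb (T.ca_trans hcawx hca)⟩

/-- helper: mutual membership forces equality -/
lemma eq_of_mem_mem_left {u p p' : T.V} (h1 : p ∈ (T.upath u p').support)
    (h2 : p' ∈ (T.upath u p).support) : p = p' :=
  T.mem_upath_split_unique h2 h1 (Walk.end_mem_support _)

lemma eq_of_mem_mem_right {v p p' : T.V} (h1 : p ∈ (T.upath p' v).support)
    (h2 : p' ∈ (T.upath p v).support) : p = p' :=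
  T.mem_upath_split_unique h2 (Walk.start_mem_support _) h1

lemma nodeFor_unique {a b w x : N} {p p' : T.V}
    (h : T.NodeFor p a b w x) (h' : T.NodeFor p' a b w x) : p = p' := by
  obtain ⟨_, hab, hwa, hwb, _, _⟩ := h
  obtain ⟨_, hab', hwa', hwb', _, _⟩ := h'
  rw [T.not_connAvoiding_iff] at hab hwa hwb hab' hwa' hwb'
  by_contra hne
  -- where is p on the path w→a relative to p'?
  rcases T.mem_upath_split hwa' hwa with hB | hA
  · -- Case B : p ∈ upath(w, p')
    rcases T.mem_upath_split hwa hwa' with hB1 | hB2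
    · -- p' ∈ upath(w, p)
      exact hne (T.mem_upath_split_unique hB1 hB (Walk.end_mem_support _) |>.symm ▸ rfl)
    · -- p' ∈ upath(p, a) : symmetric main case, roles swapped
      -- first : p' ∈ upath(p, b)
      have hp'pb : p' ∈ (T.upath p (T.leaf b)).support := by
        rcases T.mem_upath_split hwb hwb' with hc | hc
        · exact absurd (T.mem_upath_split_unique hc hB (Walk.end_mem_support _)) hne
        · exact hc
      rcases T.mem_upath_split hab' hab with hc | hc
      · -- p ∈ upath(a, p')
        exact hne (T.eq_of_mem_mem_left hc (T.mem_upath_symm hB2))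
      · -- p ∈ upath(p', b)
        exact hne (T.eq_of_mem_mem_right hc hp'pb)
  · -- Case A : p ∈ upath(p', a)
    -- first : p ∈ upath(p', b)
    have hppb : p ∈ (T.upath p' (T.leaf b)).support := by
      rcases T.mem_upath_split hwb' hwb with hc | hc
      · exact absurd (T.mem_upath_split_unique hwa' hc hA) hne
      · exact hc
    rcases T.mem_upath_split hab hab' with hc | hc
    · -- p' ∈ upath(a, p)
      exact hne (T.eq_of_mem_mem_left (T.mem_upath_symm hA) hc)
    · -- p' ∈ upath(p, b)
      exact hne (T.eq_of_mem_mem_right hppb hc)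

lemma consistent_symm_ab {a b w x : N} (h : T.Consistent a b w x) : T.Consistent b a w x := by
  obtain ⟨P, Q, hP, hQ, hd⟩ := h
  exact ⟨P.reverse, Q, hP.reverse, hQ, fun z hz =>
    hd z (by rwa [Walk.support_reverse, List.mem_reverse] at hz)⟩

lemma consistent_symm_wx {a b w x : N} (h : T.Consistent a b w x) : T.Consistent a b x w := by
  obtain ⟨P, Q, hP, hQ, hd⟩ := h
  exact ⟨P, Q.reverse, hP, hQ.reverse, fun z hz hz' =>
    hd z hz (by rwa [Walk.support_reverse, List.mem_reverse] at hz')⟩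

lemma consistent_swap {a b w x : N} (h : T.Consistent a b w x) : T.Consistent w x a b := by
  obtain ⟨P, Q, hP, hQ, hd⟩ := h
  exact ⟨Q, P, hQ, hP, fun z hz hz' => hd z hz' hz⟩

open Classical in
lemma count_nodes (a b w x : N)
    [DecidablePred fun p : T.V => T.NodeFor p a b w x ∧ w ≠ x] :
    (Finset.univ.filter fun p : T.V => T.NodeFor p a b w x ∧ w ≠ x).card
      = if Dist4 a b w x ∧ T.Consistent a b w x then 1 else 0 := by
  split_ifs with h
  · obtain ⟨p0, hp0⟩ := T.nodeFor_exists h.1 h.2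
    rw [Finset.card_eq_one]
    refine ⟨p0, ?_⟩
    ext p
    simp only [Finset.mem_filter, Finset.mem_univ, true_and, Finset.mem_singleton]
    constructor
    · rintro ⟨hp, _⟩
      exact T.nodeFor_unique hp hp0
    · rintro rfl
      exact ⟨hp0, h.1.2.2.2.2.2⟩
  · rw [Finset.card_eq_zero, Finset.filter_eq_empty_iff]
    intro p _
    rintro ⟨hp, hwx⟩
    exact h (T.nodeFor_imp hp hwx)
variable [Fintype N] [DecidableEq N]

open Classical in
lemma sum_ite_count {α : Type} [Fintype α] (P : α → Prop) (c : ℝ) :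
    ∑ p : α, (if P p then c else 0) = ((Finset.univ.filter P).card : ℝ) * c := by
  rw [← Finset.sum_filter, Finset.sum_const, nsmul_eq_mul]

open Classical in
lemma inner_rewrite (d : N → N → ℝ) {p : T.V} (h3 : T.G.degree p = 3) (a b : N) :
    (if T.ConnAvoiding p (T.leaf a) (T.leaf b) then (0:ℝ)
     else ((Finset.univ.filter (fun z : N =>
        ¬ T.ConnAvoiding p (T.leaf z) (T.leaf a) ∧
        ¬ T.ConnAvoiding p (T.leaf z) (T.leaf b))).card.choose 2 : ℝ) * d a b)
    = (1/2 : ℝ) * ∑ w : N, ∑ x : N,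
        (if T.NodeFor p a b w x ∧ w ≠ x then d a b else 0) := by
  by_cases hca : T.ConnAvoiding p (T.leaf a) (T.leaf b)
  · rw [if_pos hca]
    rw [Finset.sum_eq_zero, mul_zero]
    intro w _
    rw [Finset.sum_eq_zero]
    intro x _
    rw [if_neg]
    rintro ⟨⟨_, hab, _⟩, _⟩
    exact hab hca
  · rw [if_neg hca]
    set Z := Finset.univ.filter (fun z : N =>
        ¬ T.ConnAvoiding p (T.leaf z) (T.leaf a) ∧
        ¬ T.ConnAvoiding p (T.leaf z) (T.leaf b)) with hZ
    have hform : ∀ w x : N, (T.NodeFor p a b w x ∧ w ≠ x) ↔ (w ∈ Z ∧ x ∈ Z ∧ w ≠ x) := by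
      intro w x
      constructor
      · rintro ⟨⟨_, _, hwa, hwb, hxa, hxb⟩, hwx⟩
        exact ⟨by simp [hZ, Finset.mem_filter, hwa, hwb],
               by simp [hZ, Finset.mem_filter, hxa, hxb], hwx⟩
      · rintro ⟨hw, hx, hwx⟩
        rw [hZ, Finset.mem_filter] at hw hx
        exact ⟨⟨h3, hca, hw.2.1, hw.2.2, hx.2.1, hx.2.2⟩, hwx⟩
    have hsum : ∑ w : N, ∑ x : N, (if T.NodeFor p a b w x ∧ w ≠ x then d a b else 0)
        = (Z.offDiag.card : ℝ) * d a b := by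
      have h1 : ∀ w x : N, (if T.NodeFor p a b w x ∧ w ≠ x then d a b else 0)
          = (if (w, x) ∈ Z.offDiag then d a b else 0) := by
        intro w x
        congr 1
        simp only [eq_iff_iff, Finset.mem_offDiag]
        exact hform w x
      calc ∑ w : N, ∑ x : N, (if T.NodeFor p a b w x ∧ w ≠ x then d a b else 0)
          = ∑ w : N, ∑ x : N, (if (w, x) ∈ Z.offDiag then d a b else 0) :=
            Finset.sum_congr rfl fun w _ => Finset.sum_congr rfl fun x _ => h1 w x
        _ = ∑ t ∈ Finset.univ ×ˢ Finset.univ, (if t ∈ Z.offDiag then d a b else 0) :=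
            Eq.symm (Finset.sum_product (s := Finset.univ) (t := Finset.univ)
              (f := fun t => if t ∈ Z.offDiag then d a b else 0))
        _ = (Z.offDiag.card : ℝ) * d a b := by
            rw [Finset.univ_product_univ, Finset.sum_ite_mem, Finset.univ_inter,
              Finset.sum_const, nsmul_eq_mul]
    rw [hsum, Finset.offDiag_card]
    have hle : Z.card ≤ Z.card * Z.card := by nlinarith [Z.card.zero_le]
    rw [Nat.cast_sub hle, Nat.cast_mul, Nat.cast_choose_two]
    ring

open Classical in
lemma rhs_eq (d : N → N → ℝ) :
    (∑ p ∈ Finset.univ.filter (fun p : T.V => T.G.degree p = 3),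
        (1 / 2 : ℝ) * ∑ a : N, ∑ b : N,
          if T.ConnAvoiding p (T.leaf a) (T.leaf b) then 0
          else
            ((Finset.univ.filter (fun z : N =>
                ¬ T.ConnAvoiding p (T.leaf z) (T.leaf a) ∧
                ¬ T.ConnAvoiding p (T.leaf z) (T.leaf b))).card.choose 2 : ℝ)
              * d a b)
    = (1/4 : ℝ) * ∑ a : N, ∑ b : N, ∑ w : N, ∑ x : N,
        (if Dist4 a b w x ∧ T.Consistent a b w x then d a b else 0) := by
  have step1 : ∀ p ∈ Finset.univ.filter (fun p : T.V => T.G.degree p = 3),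
      ((1 / 2 : ℝ) * ∑ a : N, ∑ b : N,
          if T.ConnAvoiding p (T.leaf a) (T.leaf b) then 0
          else ((Finset.univ.filter (fun z : N =>
                ¬ T.ConnAvoiding p (T.leaf z) (T.leaf a) ∧
                ¬ T.ConnAvoiding p (T.leaf z) (T.leaf b))).card.choose 2 : ℝ) * d a b)
      = (1/4 : ℝ) * ∑ a : N, ∑ b : N, ∑ w : N, ∑ x : N,
          (if T.NodeFor p a b w x ∧ w ≠ x then d a b else 0) := by
    intro p hp
    rw [Finset.mem_filter] at hp
    have := fun a b => T.inner_rewrite d hp.2 a b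
    calc (1 / 2 : ℝ) * ∑ a : N, ∑ b : N, _
        = (1/2 : ℝ) * ∑ a : N, ∑ b : N, ((1/2 : ℝ) * ∑ w : N, ∑ x : N,
            (if T.NodeFor p a b w x ∧ w ≠ x then d a b else 0)) := by
          congr 1
          exact Finset.sum_congr rfl fun a _ => Finset.sum_congr rfl fun b _ => this a b
      _ = (1/4 : ℝ) * ∑ a : N, ∑ b : N, ∑ w : N, ∑ x : N,
            (if T.NodeFor p a b w x ∧ w ≠ x then d a b else 0) := by
          simp only [← Finset.mul_sum]
          ring
  rw [Finset.sum_congr rfl step1]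
  rw [← Finset.mul_sum]
  congr 1
  -- move the p-sum inside the four label sums
  rw [Finset.sum_comm]
  refine Finset.sum_congr rfl fun a _ => ?_
  rw [Finset.sum_comm]
  refine Finset.sum_congr rfl fun b _ => ?_
  rw [Finset.sum_comm]
  refine Finset.sum_congr rfl fun w _ => ?_
  rw [Finset.sum_comm]
  refine Finset.sum_congr rfl fun x _ => ?_
  -- now: ∑ p in filter deg3, ite (NodeFor ∧ ≠) = ite (Dist4 ∧ Consistent)
  have hext : ∑ p ∈ Finset.univ.filter (fun p : T.V => T.G.degree p = 3),
      (if T.NodeFor p a b w x ∧ w ≠ x then d a b else 0)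
      = ∑ p : T.V, (if T.NodeFor p a b w x ∧ w ≠ x then d a b else 0) := by
    apply Finset.sum_subset (Finset.filter_subset _ _)
    intro p _ hp
    rw [Finset.mem_filter] at hp
    rw [if_neg]
    rintro ⟨hN, _⟩
    exact hp ⟨Finset.mem_univ p, hN.1⟩
  rw [hext, ← Finset.sum_filter, Finset.sum_const, nsmul_eq_mul]
  rw [T.count_nodes a b w x]
  split_ifs with h
  · simp
  · simp


open Classical in
lemma fiber_eq (u v w x : N) (huv : u ≠ v) (huw : u ≠ w) (hux : u ≠ x)
    (hvw : v ≠ w) (hvx : v ≠ x) (hwx : w ≠ x) (hcons : T.Consistent u v w x) :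
    ((Finset.univ.filter (fun t : N × N × N × N =>
        Dist4 t.1 t.2.1 t.2.2.1 t.2.2.2 ∧ T.Consistent t.1 t.2.1 t.2.2.1 t.2.2.2)).filter
      (fun t => s(s(t.1, t.2.1), s(t.2.2.1, t.2.2.2)) = s(s(u, v), s(w, x)))).card = 8 := by
  have hvu := huv.symm; have hwu := huw.symm; have hxu := hux.symm
  have hwv := hvw.symm; have hxv := hvx.symm; have hxw := hwx.symm
  have hc1 := T.consistent_symm_ab hcons
  have hc2 := T.consistent_symm_wx hcons
  have hc3 := T.consistent_symm_wx hc1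
  have hc4 := T.consistent_swap hcons
  have hc5 := T.consistent_symm_ab hc4
  have hc6 := T.consistent_symm_wx hc4
  have hc7 := T.consistent_symm_wx hc5
  have hset : (Finset.univ.filter (fun t : N × N × N × N =>
        Dist4 t.1 t.2.1 t.2.2.1 t.2.2.2 ∧ T.Consistent t.1 t.2.1 t.2.2.1 t.2.2.2)).filter
      (fun t => s(s(t.1, t.2.1), s(t.2.2.1, t.2.2.2)) = s(s(u, v), s(w, x)))
      = ({(u,v,w,x), (v,u,w,x), (u,v,x,w), (v,u,x,w),
          (w,x,u,v), (x,w,u,v), (w,x,v,u), (x,w,v,u)} :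
          Finset (N × N × N × N)) := by
    ext ⟨a, b, c, e⟩
    simp only [Finset.mem_filter, Finset.mem_univ, true_and,
      Finset.mem_insert, Finset.mem_singleton, Prod.mk.injEq, Sym2.eq_iff]
    constructor
    · rintro ⟨-, (⟨⟨rfl,rfl⟩|⟨rfl,rfl⟩, ⟨rfl,rfl⟩|⟨rfl,rfl⟩⟩ |
        ⟨⟨rfl,rfl⟩|⟨rfl,rfl⟩, ⟨rfl,rfl⟩|⟨rfl,rfl⟩⟩)⟩ <;> simp
    · rintro (⟨rfl, rfl, rfl, rfl⟩ | ⟨rfl, rfl, rfl, rfl⟩ | ⟨rfl, rfl, rfl, rfl⟩ |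
        ⟨rfl, rfl, rfl, rfl⟩ | ⟨rfl, rfl, rfl, rfl⟩ | ⟨rfl, rfl, rfl, rfl⟩ |
        ⟨rfl, rfl, rfl, rfl⟩ | ⟨rfl, rfl, rfl, rfl⟩)
      all_goals exact ⟨⟨⟨by assumption, by assumption, by assumption, by assumption,
        by assumption, by assumption⟩, by assumption⟩, by simp⟩
  rw [hset]
  rw [Finset.card_insert_of_notMem (by simp [Prod.ext_iff, huv, huw, hux, hvw, hvx, hwx, hvu, hwu, hxu, hwv, hxv, hxw]),
      Finset.card_insert_of_notMem (by simp [Prod.ext_iff, huv, huw, hux, hvw, hvx, hwx, hvu, hwu, hxu, hwv, hxv, hxw]),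
      Finset.card_insert_of_notMem (by simp [Prod.ext_iff, huv, huw, hux, hvw, hvx, hwx, hvu, hwu, hxu, hwv, hxv, hxw]),
      Finset.card_insert_of_notMem (by simp [Prod.ext_iff, huv, huw, hux, hvw, hvx, hwx, hvu, hwu, hxu, hwv, hxv, hxw]),
      Finset.card_insert_of_notMem (by simp [Prod.ext_iff, huv, huw, hux, hvw, hvx, hwx, hvu, hwu, hxu, hwv, hxv, hxw]),
      Finset.card_insert_of_notMem (by simp [Prod.ext_iff, huv, huw, hux, hvw, hvx, hwx, hvu, hwu, hxu, hwv, hxv, hxw]),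
      Finset.card_insert_of_notMem (by simp [Prod.ext_iff, huv, huw, hux, hvw, hvx, hwx, hvu, hwu, hxu, hwv, hxv, hxw]),
      Finset.card_singleton]
set_option maxHeartbeats 1000000 in
open Classical in
lemma cost_eq_quad (C : Sym2 (Sym2 N) → ℝ) (d : N → N → ℝ)
    (hC : ∀ u v w x : N, C s(s(u, v), s(w, x)) = d u v + d w x) :
    T.cost C = (1/4 : ℝ) * ∑ a : N, ∑ b : N, ∑ w : N, ∑ x : N,
        (if Dist4 a b w x ∧ T.Consistent a b w x then d a b else 0) := by
  classical
  set φ : N × N × N × N → Sym2 (Sym2 N) :=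
    (fun t => s(s(t.1, t.2.1), s(t.2.2.1, t.2.2.2))) with hφ
  set Qfin := (Set.toFinite T.QT).toFinset with hQfin
  have hcost : T.cost C = ∑ q ∈ Qfin, C q := by
    rw [TernaryTree.cost, ← Set.Finite.coe_toFinset (Set.toFinite T.QT),
      finsum_mem_coe_finset]
  set OG := Finset.univ.filter (fun t : N × N × N × N =>
      Dist4 t.1 t.2.1 t.2.2.1 t.2.2.2 ∧ T.Consistent t.1 t.2.1 t.2.2.1 t.2.2.2) with hOG
  have hquad : ∑ t ∈ OG, d t.1 t.2.1
      = ∑ a : N, ∑ b : N, ∑ w : N, ∑ x : N,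
        (if Dist4 a b w x ∧ T.Consistent a b w x then d a b else 0) := by
    rw [hOG, Finset.sum_filter]
    simp only [Fintype.sum_prod_type]
  have hmap : ∀ t ∈ OG, φ t ∈ Qfin := by
    intro t ht
    rw [hOG, Finset.mem_filter] at ht
    obtain ⟨-, ⟨h12, h13, h14, h23, h24, h34⟩, hcons⟩ := ht
    rw [hQfin, Set.Finite.mem_toFinset]
    exact ⟨t.1, t.2.1, t.2.2.1, t.2.2.2, h12, h13, h14, h23, h24, h34, rfl, hcons⟩
  have hfiber_card : ∀ q ∈ Qfin, (OG.filter (fun t => φ t = q)).card = 8 := by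
    intro q hq
    rw [hQfin, Set.Finite.mem_toFinset] at hq
    obtain ⟨u, v, w, x, huv, huw, hux, hvw, hvx, hwx, rfl, hcons⟩ := hq
    exact T.fiber_eq u v w x huv huw hux hvw hvx hwx hcons
  have hfib := Finset.sum_fiberwise_of_maps_to hmap (fun t => C (φ t))
  have hinner : ∀ q ∈ Qfin, ∑ t ∈ OG.filter (fun t => φ t = q), C (φ t) = 8 * C q := by
    intro q hq
    have hcongr : ∀ t ∈ OG.filter (fun t => φ t = q), C (φ t) = C q := by
      intro t ht
      rw [(Finset.mem_filter.mp ht).2]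
    rw [Finset.sum_congr rfl hcongr, Finset.sum_const, hfiber_card q hq, nsmul_eq_mul]
    norm_num
  have h8 : ∑ t ∈ OG, C (φ t) = 8 * ∑ q ∈ Qfin, C q := by
    rw [← hfib, Finset.sum_congr rfl hinner, ← Finset.mul_sum]
  have hCval : ∀ t ∈ OG, C (φ t) = d t.1 t.2.1 + d t.2.2.1 t.2.2.2 := by
    intro t _
    rw [hφ]
    exact hC t.1 t.2.1 t.2.2.1 t.2.2.2
  have hswapOG : ∀ t ∈ OG, (t.2.2.1, t.2.2.2, t.1, t.2.1) ∈ OG := by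
    intro t ht
    rw [hOG, Finset.mem_filter] at ht ⊢
    obtain ⟨-, ⟨h12, h13, h14, h23, h24, h34⟩, hcons⟩ := ht
    exact ⟨Finset.mem_univ _, ⟨h34, h13.symm, h23.symm, h14.symm, h24.symm, h12⟩,
      T.consistent_swap hcons⟩
  have hswap : ∑ t ∈ OG, d t.2.2.1 t.2.2.2 = ∑ t ∈ OG, d t.1 t.2.1 := by
    apply Finset.sum_nbij' (i := fun t : N × N × N × N => (t.2.2.1, t.2.2.2, t.1, t.2.1))
      (j := fun t : N × N × N × N => (t.2.2.1, t.2.2.2, t.1, t.2.1))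
    · exact hswapOG
    · exact hswapOG
    · intro t _; rfl
    · intro t _; rfl
    · intro t _; rfl
  have hsplit : ∑ t ∈ OG, C (φ t)
      = ∑ t ∈ OG, d t.1 t.2.1 + ∑ t ∈ OG, d t.2.2.1 t.2.2.2 := by
    rw [Finset.sum_congr rfl hCval, Finset.sum_add_distrib]
  have : (8 : ℝ) * T.cost C = 2 * ∑ t ∈ OG, d t.1 t.2.1 := by
    rw [hcost, ← h8, hsplit, hswap]; ring
  rw [← hquad]
  linarith

end TernaryTree

open scoped Classical in
/-- When the cost of a quartet topology is `C(uv|wx) = d(u,v) + d(w,x)` for a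
symmetric distance function `d`, the tree cost decomposes as a sum over the
internal nodes `p` of `T` of the node cost
`C(p) = Σᵢ C(nᵢ,2) · Σ_{a ∈ T_j, b ∈ T_k} d(a,b)`, where `T₁, T₂, T₃` are the
three components of `T` with `p` deleted, and `nᵢ` is the number of leaves of
`Tᵢ`.  Here the node cost is expressed as a sum over the (ordered, hence the
factor 1/2) pairs of leaves `a, b` lying in two different components of
`T` minus `p`, weighted by `C(n,2)` where `n` counts the leaves in the third
component, the one containing neither `a` nor `b`. -/
theorem tree_cost_eq_sum_over_internal_nodes
    {N : Type} [Fintype N] [DecidableEq N] (h4 : 4 ≤ Fintype.card N)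
    (T : TernaryTree N)
    (d : N → N → ℝ) (hd : ∀ a b : N, d a b = d b a)
    (C : Sym2 (Sym2 N) → ℝ)
    (hC : ∀ u v w x : N, C s(s(u, v), s(w, x)) = d u v + d w x) :
    T.cost C =
      ∑ p ∈ Finset.univ.filter (fun p : T.V => T.G.degree p = 3),
        (1 / 2 : ℝ) * ∑ a : N, ∑ b : N,
          if T.ConnAvoiding p (T.leaf a) (T.leaf b) then 0
          else
            ((Finset.univ.filter (fun z : N =>
                ¬ T.ConnAvoiding p (T.leaf z) (T.leaf a) ∧
                ¬ T.ConnAvoiding p (T.leaf z) (T.leaf b))).card.choose 2 : ℝ)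
              * d a b := by
  rw [T.cost_eq_quad C d hC]
  exact (T.rhs_eq d).symm
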